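/- Plane waves span the spherical monogenics: let m ≥ 2 and k ∈ ℕ. Every Clifford-valued polynomial map M : ℝ^m → Cl_m that is homogeneous of degree k and monogenic can be written as a finite right-linear combination of monogenic plane waves: there exist finitely many pairs of orthonormal vectors (t_i, s_i) in ℝ^m and elements c_i ∈ Cl_m such that M(x) = Σ_i (⟨x,t_i⟩·1 − ι(t_i)ι(s_i)·⟨x,s_i⟩)^k · c_i for all x ∈ ℝ^m. -/

import Mathlib

open CliffordAlgebra

/-- The quadratic form `Q(x) = -(x₁² + ⋯ + x_m²)` on `ℝ^m`, whose Clifford algebra is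
the real Clifford algebra `Cl_m`. -/
noncomputable def negEuclidQ (m : ℕ) : QuadraticForm ℝ (Fin m → ℝ) :=
  QuadraticMap.weightedSumSquares ℝ (fun _ : Fin m => (-1 : ℝ))

/-- `f : ℝ^m → Cl_m` is a Clifford-valued polynomial map homogeneous of degree `k`:
it is a finite sum `f(x) = ∑_α x^α c_α` with `c_α = 0` unless `|α| = k`. -/
def IsHomogPolyMap (m k : ℕ) (f : (Fin m → ℝ) → CliffordAlgebra (negEuclidQ m)) : Prop :=
  ∃ c : (Fin m →₀ ℕ) →₀ CliffordAlgebra (negEuclidQ m),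
    (∀ α ∈ c.support, (∑ j, α j) = k) ∧
    ∀ x, f x = c.sum fun α a => (∏ j, x j ^ α j) • a

/-- `f : ℝ^m → Cl_m` is (left) monogenic: its partial derivatives `g j = ∂_j f` (characterized
through all `ℝ`-linear functionals on `Cl_m`, which separate points) satisfy
`∑_j ι(ε_j)·(∂_j f)(x) = 0` for all `x`. -/
def IsMonogenic (m : ℕ) (f : (Fin m → ℝ) → CliffordAlgebra (negEuclidQ m)) : Prop :=
  ∃ g : Fin m → (Fin m → ℝ) → CliffordAlgebra (negEuclidQ m),
    (∀ (j : Fin m) (x : Fin m → ℝ) (φ : CliffordAlgebra (negEuclidQ m) →ₗ[ℝ] ℝ),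
      deriv (fun u : ℝ => φ (f (Function.update x j u))) (x j) = φ (g j x)) ∧
    ∀ x : Fin m → ℝ, ∑ j, ι (negEuclidQ m) (Pi.single j 1) * g j x = 0

namespace PW

variable {m : ℕ}

abbrev Cl (m : ℕ) := CliffordAlgebra (negEuclidQ m)
abbrev V (m : ℕ) := (Fin m →₀ ℕ) →₀ Cl m

noncomputable def eV (j : Fin m) : Cl m := ι (negEuclidQ m) (Pi.single j 1)

/-! ### duality helpers -/

lemma sep {W : Type*} [AddCommGroup W] [Module ℝ W] {v : W}
    (h : ∀ φ : W →ₗ[ℝ] ℝ, φ v = 0) : v = 0 :=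
  (Module.forall_dual_apply_eq_zero_iff ℝ v).mp h

lemma mem_of_dual {W : Type*} [AddCommGroup W] [Module ℝ W] (U : Submodule ℝ W) {v : W}
    (h : ∀ φ : W →ₗ[ℝ] ℝ, (∀ u ∈ U, φ u = 0) → φ v = 0) : v ∈ U := by
  rw [← Submodule.Quotient.mk_eq_zero U]
  apply sep
  intro ψ
  have h0 : ∀ u ∈ U, (ψ ∘ₗ U.mkQ) u = 0 := by
    intro u hu
    have : U.mkQ u = 0 := (Submodule.Quotient.mk_eq_zero U).mpr hu
    simp [LinearMap.comp_apply, this]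
  have := h (ψ ∘ₗ U.mkQ) h0
  simpa using this

lemma coeff_mem {W : Type*} [AddCommGroup W] [Module ℝ W] (U : Submodule ℝ W) (N : ℕ)
    (v : ℕ → W) (h : ∀ r : ℝ, (∑ j ∈ Finset.range N, r ^ j • v j) ∈ U) :
    ∀ j, j < N → v j ∈ U := by
  intro j hj
  apply mem_of_dual
  intro φ hφ
  have hp : ∀ r : ℝ,
      (∑ l ∈ Finset.range N, Polynomial.C (φ (v l)) * Polynomial.X ^ l : Polynomial ℝ).eval r
        = 0 := by
    intro r
    have h0 := hφ _ (h r)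
    simp only [map_sum, map_smul, smul_eq_mul] at h0
    rw [Polynomial.eval_finset_sum]
    simp only [Polynomial.eval_mul, Polynomial.eval_C, Polynomial.eval_pow, Polynomial.eval_X]
    rw [← h0]
    exact Finset.sum_congr rfl fun l _ => mul_comm _ _
  have hz := Polynomial.zero_of_eval_zero _ hp
  have hc := congrArg (fun p : Polynomial ℝ => p.coeff j) hz
  simpa [Polynomial.finset_sum_coeff, Polynomial.coeff_C_mul, Polynomial.coeff_X_pow,
    Finset.sum_ite_eq', Finset.mem_range, hj] using hc

/-! ### operators on coefficient vectors -/

noncomputable def shN {N : Type*} [AddCommMonoid N] [Module ℝ N] (j : Fin m) :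
    ((Fin m →₀ ℕ) →₀ N) →ₗ[ℝ] ((Fin m →₀ ℕ) →₀ N) :=
  Finsupp.lsum ℝ fun α => Finsupp.lsingle (α + Finsupp.single j 1)

noncomputable def mulLinN {N : Type*} [AddCommMonoid N] [Module ℝ N] (t : Fin m → ℝ) :
    ((Fin m →₀ ℕ) →₀ N) →ₗ[ℝ] ((Fin m →₀ ℕ) →₀ N) :=
  ∑ j, t j • shN j

noncomputable def evL (x : Fin m → ℝ) : V m →ₗ[ℝ] Cl m :=
  Finsupp.lsum ℝ fun α => (∏ j, x j ^ α j) • (LinearMap.id : Cl m →ₗ[ℝ] Cl m)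

noncomputable def lmulV (z : Cl m) : V m →ₗ[ℝ] V m :=
  Finsupp.mapRange.linearMap (LinearMap.mulLeft ℝ z)

noncomputable def pderV (j : Fin m) : V m →ₗ[ℝ] V m :=
  Finsupp.lsum ℝ fun α => (α j : ℝ) • Finsupp.lsingle (α - Finsupp.single j 1)

noncomputable def restV (d : Fin m) : V m →ₗ[ℝ] V m :=
  Finsupp.lsum ℝ fun α => if α d = 0 then Finsupp.lsingle α else 0

noncomputable def TT (d : Fin m) (t : Fin m → ℝ) : Cl m := ι (negEuclidQ m) t * eV d

noncomputable def mulPW (d : Fin m) (t : Fin m → ℝ) : V m →ₗ[ℝ] V m :=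
  mulLinN t - (shN d) ∘ₗ lmulV (TT d t)

noncomputable def uC (d : Fin m) (t : Fin m → ℝ) (j : Fin m) : Cl m :=
  algebraMap ℝ (Cl m) (t j) - (if j = d then TT d t else 0)

noncomputable def diracV (m : ℕ) : V m →ₗ[ℝ] V m := ∑ j, lmulV (eV j) ∘ₗ pderV j

@[simp] lemma evL_single (x : Fin m → ℝ) (α) (a : Cl m) :
    evL x (Finsupp.single α a) = (∏ j, x j ^ α j) • a := by
  simp [evL]

lemma evL_eq_sum (x : Fin m → ℝ) (c : V m) :
    evL x c = c.sum fun α a => (∏ j, x j ^ α j) • a := rfl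

@[simp] lemma shN_single {N : Type*} [AddCommMonoid N] [Module ℝ N] (j : Fin m) (α) (a : N) :
    shN j (Finsupp.single α a) = Finsupp.single (α + Finsupp.single j 1) a := by
  simp [shN]

@[simp] lemma lmulV_single (z : Cl m) (α) (a : Cl m) :
    lmulV z (Finsupp.single α a) = Finsupp.single α (z * a) := by
  simp [lmulV, LinearMap.mulLeft_apply]

@[simp] lemma pderV_single (j : Fin m) (α) (a : Cl m) :
    pderV j (Finsupp.single α a)
      = (α j : ℝ) • Finsupp.single (α - Finsupp.single j 1) a := by
  simp [pderV]

@[simp] lemma restV_single (d : Fin m) (α) (a : Cl m) :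
    restV d (Finsupp.single α a) = if α d = 0 then Finsupp.single α a else 0 := by
  by_cases h : α d = 0 <;> simp [restV, h]

lemma mulLinN_single {N : Type*} [AddCommMonoid N] [Module ℝ N] (t : Fin m → ℝ) (α) (a : N) :
    mulLinN t (Finsupp.single α a)
      = ∑ j, t j • Finsupp.single (α + Finsupp.single j 1) a := by
  simp [mulLinN]

lemma mulLinN_smul {N : Type*} [AddCommMonoid N] [Module ℝ N] (r : ℝ) (t : Fin m → ℝ) :
    (mulLinN (r • t) : ((Fin m →₀ ℕ) →₀ N) →ₗ[ℝ] _) = r • mulLinN t := by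
  simp only [mulLinN, Finset.smul_sum]
  refine Finset.sum_congr rfl fun j _ => ?_
  rw [Pi.smul_apply, smul_eq_mul, mul_smul]

lemma mulLinN_add {N : Type*} [AddCommMonoid N] [Module ℝ N] (t s : Fin m → ℝ) :
    (mulLinN (t + s) : ((Fin m →₀ ℕ) →₀ N) →ₗ[ℝ] _) = mulLinN t + mulLinN s := by
  simp only [mulLinN, ← Finset.sum_add_distrib]
  refine Finset.sum_congr rfl fun j _ => ?_
  rw [Pi.add_apply, add_smul]

lemma mulLinN_zero {N : Type*} [AddCommMonoid N] [Module ℝ N] :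
    (mulLinN (0 : Fin m → ℝ) : ((Fin m →₀ ℕ) →₀ N) →ₗ[ℝ] _) = 0 := by
  simp [mulLinN]

/-! ### apply formulas -/

lemma lmulV_apply (z : Cl m) (c : V m) (β) : lmulV z c β = z * c β := by
  simp [lmulV, LinearMap.mulLeft_apply]

lemma pderV_apply (j : Fin m) (c : V m) (β) :
    pderV j c β = (β j + 1 : ℝ) • c (β + Finsupp.single j 1) := by
  induction c using Finsupp.induction_linear with
  | zero => simp
  | add f g hf hg => simp [Finsupp.add_apply, hf, hg, smul_add]
  | single α a =>
    rw [pderV_single]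
    by_cases hα : α = β + Finsupp.single j 1
    · subst hα
      have h1 : β + Finsupp.single j 1 - Finsupp.single j 1 = β := by
        ext i
        simp [Finsupp.tsub_apply, Finsupp.add_apply]
      have h2 : (β + Finsupp.single j 1 : Fin m →₀ ℕ) j = β j + 1 := by
        simp [Finsupp.add_apply]
      rw [h1, h2]
      simp only [Finsupp.smul_apply, Finsupp.single_eq_same]
      norm_cast
    · rw [Finsupp.single_eq_of_ne' hα, smul_zero]
      by_cases hj : α j = 0
      · simp [hj]
      · have hle : Finsupp.single j 1 ≤ α := by
          rw [Finsupp.single_le_iff]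
          omega
        have hne : α - Finsupp.single j 1 ≠ β := by
          intro hc
          apply hα
          rw [← hc, tsub_add_cancel_of_le hle]
        simp only [Finsupp.smul_apply, Finsupp.single_eq_of_ne' hne, smul_zero]

lemma restV_apply (d : Fin m) (c : V m) (β) :
    restV d c β = if β d = 0 then c β else 0 := by
  induction c using Finsupp.induction_linear with
  | zero => simp
  | add f g hf hg =>
    rw [map_add, Finsupp.add_apply, hf, hg, Finsupp.add_apply]
    by_cases h : β d = 0 <;> simp [h]
  | single α a =>
    rw [restV_single]
    by_cases hαβ : α = β
    · subst hαβ
      by_cases h : α d = 0 <;> simp [h]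
    · by_cases h : α d = 0 <;> by_cases h' : β d = 0 <;>
        simp [h, h', Finsupp.single_eq_of_ne' hαβ]

/-! ### operator identities (in the endomorphism ring of `V m`) -/

lemma shN_comm {N : Type*} [AddCommMonoid N] [Module ℝ N] (i j : Fin m) :
    (shN i : ((Fin m →₀ ℕ) →₀ N) →ₗ[ℝ] _) * shN j = shN j * shN i :=
  Finsupp.lhom_ext fun α a => by
    simp [Module.End.mul_apply, add_right_comm]

lemma lmulV_mul_shN (z : Cl m) (j : Fin m) :
    lmulV z * (shN j : V m →ₗ[ℝ] V m) = shN j * lmulV z :=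
  Finsupp.lhom_ext fun α a => by
    rw [Module.End.mul_apply, Module.End.mul_apply, shN_single, lmulV_single, lmulV_single,
      shN_single]

lemma lmulV_mul_lmulV (z w : Cl m) : lmulV z * lmulV w = lmulV (z * w) :=
  Finsupp.lhom_ext fun α a => by
    rw [Module.End.mul_apply, lmulV_single, lmulV_single, lmulV_single, mul_assoc]

lemma lmulV_mul_mulLinN (z : Cl m) (t : Fin m → ℝ) :
    lmulV z * (mulLinN t : V m →ₗ[ℝ] V m) = mulLinN t * lmulV z := by
  unfold mulLinN
  rw [Finset.mul_sum, Finset.sum_mul]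
  refine Finset.sum_congr rfl fun i _ => ?_
  rw [mul_smul_comm, smul_mul_assoc, lmulV_mul_shN]

lemma shN_mul_mulLinN (t : Fin m → ℝ) (i : Fin m) :
    (shN i : V m →ₗ[ℝ] V m) * mulLinN t = mulLinN t * shN i := by
  unfold mulLinN
  rw [Finset.mul_sum, Finset.sum_mul]
  refine Finset.sum_congr rfl fun l _ => ?_
  rw [mul_smul_comm, smul_mul_assoc, shN_comm]

lemma pderV_mul_shN_self (j : Fin m) :
    pderV j * (shN j : V m →ₗ[ℝ] V m) = shN j * pderV j + 1 := by
  apply Finsupp.lhom_ext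
  intro α a
  simp only [LinearMap.add_apply, Module.End.mul_apply, shN_single, pderV_single,
    Module.End.one_apply]
  have h1 : α + Finsupp.single j 1 - Finsupp.single j 1 = α := by
    ext l; simp [Finsupp.tsub_apply]
  have h2 : (α + Finsupp.single j 1 : Fin m →₀ ℕ) j = α j + 1 := by simp
  rw [h1, h2]
  by_cases hz : α j = 0
  · simp [hz]
  · have hle : Finsupp.single j 1 ≤ α := by rw [Finsupp.single_le_iff]; omega
    rw [map_smul, shN_single, tsub_add_cancel_of_le hle]
    push_cast
    rw [add_smul, one_smul]

lemma pderV_mul_shN_ne {i j : Fin m} (h : i ≠ j) :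
    pderV j * (shN i : V m →ₗ[ℝ] V m) = shN i * pderV j := by
  apply Finsupp.lhom_ext
  intro α a
  simp only [Module.End.mul_apply, shN_single, pderV_single]
  have h2 : (α + Finsupp.single i 1 : Fin m →₀ ℕ) j = α j := by
    simp [Finsupp.add_apply, Finsupp.single_apply, h]
  rw [h2, map_smul, shN_single]
  by_cases hz : α j = 0
  · simp [hz]
  · have hle : Finsupp.single j 1 ≤ α := by rw [Finsupp.single_le_iff]; omega
    rw [tsub_add_eq_add_tsub hle]

lemma pderV_mul_lmulV (j : Fin m) (z : Cl m) :
    pderV j * lmulV z = lmulV z * pderV j :=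
  Finsupp.lhom_ext fun α a => by
    rw [Module.End.mul_apply, Module.End.mul_apply, lmulV_single, pderV_single, pderV_single,
      map_smul, lmulV_single]

lemma pderV_mul_mulLinN (j : Fin m) (t : Fin m → ℝ) :
    pderV j * (mulLinN t : V m →ₗ[ℝ] V m)
      = mulLinN t * pderV j + t j • (1 : V m →ₗ[ℝ] V m) := by
  unfold mulLinN
  rw [Finset.mul_sum, Finset.sum_mul]
  have key : ∀ i : Fin m, i ∈ Finset.univ →
      pderV j * (t i • (shN i : V m →ₗ[ℝ] V m))
        = t i • ((shN i : V m →ₗ[ℝ] V m) * pderV j)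
          + (if i = j then t i • (1 : V m →ₗ[ℝ] V m) else 0) := by
    intro i _
    by_cases h : i = j
    · subst h
      rw [if_pos rfl, mul_smul_comm, pderV_mul_shN_self, smul_add]
    · rw [if_neg h, mul_smul_comm, pderV_mul_shN_ne h, add_zero]
  rw [Finset.sum_congr rfl key, Finset.sum_add_distrib, Finset.sum_ite_eq' Finset.univ j
    (fun i => t i • (1 : V m →ₗ[ℝ] V m))]
  simp [smul_mul_assoc]

/-! ### the plane-wave multiplication operator -/

lemma lmulV_mul_mulPW (d : Fin m) (t : Fin m → ℝ) {z : Cl m} (hz : z * TT d t = TT d t * z) :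
    lmulV z * mulPW d t = mulPW d t * lmulV z := by
  unfold mulPW
  rw [Module.End.mul_eq_comp, Module.End.mul_eq_comp, LinearMap.comp_sub, LinearMap.sub_comp]
  congr 1
  · rw [← Module.End.mul_eq_comp, ← Module.End.mul_eq_comp, lmulV_mul_mulLinN]
  · rw [← Module.End.mul_eq_comp, ← Module.End.mul_eq_comp, ← Module.End.mul_eq_comp,
      ← mul_assoc, lmulV_mul_shN, mul_assoc, lmulV_mul_lmulV, hz, ← lmulV_mul_lmulV,
      mul_assoc]

lemma pderV_mul_mulPW (j d : Fin m) (t : Fin m → ℝ) :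
    pderV j * mulPW d t = mulPW d t * pderV j + lmulV (uC d t j) := by
  unfold mulPW uC
  have h1 : pderV j * ((shN d : V m →ₗ[ℝ] V m) ∘ₗ lmulV (TT d t))
      = ((shN d : V m →ₗ[ℝ] V m) ∘ₗ lmulV (TT d t)) * pderV j
        + (if j = d then lmulV (TT d t) else 0) := by
    by_cases h : j = d
    · subst h
      rw [if_pos rfl, ← Module.End.mul_eq_comp, ← mul_assoc, pderV_mul_shN_self, add_mul,
        mul_assoc, pderV_mul_lmulV, ← mul_assoc, one_mul]
    · rw [if_neg h, add_zero, ← Module.End.mul_eq_comp, ← mul_assoc,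
        pderV_mul_shN_ne (Ne.symm h), mul_assoc, pderV_mul_lmulV, ← mul_assoc]
  have h2 : lmulV (algebraMap ℝ (Cl m) (t j) - if j = d then TT d t else 0)
      = t j • (1 : V m →ₗ[ℝ] V m) - (if j = d then lmulV (TT d t) else 0) := by
    apply Finsupp.lhom_ext
    intro α a
    by_cases h : j = d <;>
      simp [h, sub_mul, Algebra.smul_def, Finsupp.single_sub]
  rw [mul_sub (α := Module.End ℝ (V m)), sub_mul (α := Module.End ℝ (V m)),
    pderV_mul_mulLinN, h1, h2]
  abel

/-! ### Clifford algebra computations -/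

lemma Q_apply (t : Fin m → ℝ) : negEuclidQ m t = - ∑ j, t j ^ 2 := by
  rw [negEuclidQ, QuadraticMap.weightedSumSquares_apply, ← Finset.sum_neg_distrib]
  exact Finset.sum_congr rfl fun j _ => by rw [smul_eq_mul]; ring

lemma isOrtho_of {t s : Fin m → ℝ} (h : ∑ j, t j * s j = 0) :
    (negEuclidQ m).IsOrtho t s := by
  rw [QuadraticMap.isOrtho_def, Q_apply, Q_apply, Q_apply]
  have h2 : ∑ j, (t + s) j ^ 2 = (∑ j, t j ^ 2) + (∑ j, s j ^ 2) + 2 * ∑ j, t j * s j := by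
    have h3 : ∀ j : Fin m, (t + s) j ^ 2 = t j ^ 2 + s j ^ 2 + 2 * (t j * s j) := by
      intro j; rw [Pi.add_apply]; ring
    rw [Finset.sum_congr rfl fun j _ => h3 j, Finset.sum_add_distrib, Finset.sum_add_distrib,
      ← Finset.mul_sum]
  rw [h2, h]
  ring

lemma sum_mul_single (t : Fin m → ℝ) (d : Fin m) :
    ∑ j, t j * (Pi.single d 1 : Fin m → ℝ) j = t d := by
  have : ∀ j : Fin m, t j * (Pi.single d 1 : Fin m → ℝ) j = if j = d then t j else 0 := by
    intro j
    rcases eq_or_ne j d with h | h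
    · subst h; simp
    · simp [Pi.single_apply, h]
  rw [Finset.sum_congr rfl fun j _ => this j, Finset.sum_ite_eq' Finset.univ d]
  simp

lemma single_sq_sum (d : Fin m) : ∑ j, (Pi.single d 1 : Fin m → ℝ) j ^ 2 = 1 := by
  have : ∀ j : Fin m, (Pi.single d 1 : Fin m → ℝ) j ^ 2 = if j = d then 1 else 0 := by
    intro j
    rcases eq_or_ne j d with h | h
    · subst h; simp
    · simp [Pi.single_apply, h]
  rw [Finset.sum_congr rfl fun j _ => this j, Finset.sum_ite_eq' Finset.univ d]
  simp

lemma iota_t_sq (t : Fin m → ℝ) (htu : ∑ j, t j ^ 2 = 1) :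
    ι (negEuclidQ m) t * ι (negEuclidQ m) t = -1 := by
  rw [ι_sq_scalar, Q_apply, htu, map_neg, map_one]

lemma eV_sq (d : Fin m) : eV (m := m) d * eV d = -1 := by
  rw [eV, ι_sq_scalar, Q_apply, single_sq_sum, map_neg, map_one]

lemma eV_mul_iota (d : Fin m) (t : Fin m → ℝ) (ht : t d = 0) :
    eV (m := m) d * ι (negEuclidQ m) t = -(ι (negEuclidQ m) t * eV d) := by
  refine ι_mul_ι_comm_of_isOrtho ?_
  refine QuadraticMap.isOrtho_comm.mp (isOrtho_of ?_)
  rw [sum_mul_single, ht]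

lemma eV_mul_TT (d : Fin m) (t : Fin m → ℝ) (ht : t d = 0) :
    eV (m := m) d * TT d t = ι (negEuclidQ m) t := by
  unfold TT
  rw [← mul_assoc, eV_mul_iota d t ht, neg_mul, mul_assoc, eV_sq, mul_neg_one, neg_neg]

lemma TT_sq (d : Fin m) (t : Fin m → ℝ) (ht : t d = 0) (htu : ∑ j, t j ^ 2 = 1) :
    TT (m := m) d t * TT d t = -1 := by
  conv_lhs => rw [TT, mul_assoc, ← TT]
  rw [eV_mul_TT d t ht, iota_t_sq t htu]

lemma iota_sum (t : Fin m → ℝ) : ∑ j, t j • eV (m := m) j = ι (negEuclidQ m) t := by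
  have h : ∑ j, t j • (Pi.single j 1 : Fin m → ℝ) = t := by
    funext l
    rw [Finset.sum_apply]
    have : ∀ j : Fin m, (t j • (Pi.single j 1 : Fin m → ℝ)) l = if j = l then t j else 0 := by
      intro j
      rcases eq_or_ne j l with h | h
      · subst h; simp
      · simp [Pi.single_apply, h]
    rw [Finset.sum_congr rfl fun j _ => this j, Finset.sum_ite_eq' Finset.univ l]
    simp
  calc ∑ j, t j • eV (m := m) j
      = ι (negEuclidQ m) (∑ j, t j • (Pi.single j 1 : Fin m → ℝ)) := by
        rw [map_sum]
        exact Finset.sum_congr rfl fun j _ => (map_smul _ _ _).symm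
    _ = ι (negEuclidQ m) t := by rw [h]

lemma iota_mul_TT (d : Fin m) (t : Fin m → ℝ) (htu : ∑ j, t j ^ 2 = 1) :
    ι (negEuclidQ m) t * TT d t = -(eV d) := by
  rw [TT, ← mul_assoc, iota_t_sq t htu, neg_one_mul]

lemma sum_eV_uC (d : Fin m) (t : Fin m → ℝ) (ht : t d = 0) :
    ∑ j, eV (m := m) j * uC d t j = 0 := by
  unfold uC
  simp only [mul_sub]
  rw [Finset.sum_sub_distrib]
  have h1 : ∑ j, eV (m := m) j * algebraMap ℝ (Cl m) (t j) = ι (negEuclidQ m) t := by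
    rw [← iota_sum t]
    exact Finset.sum_congr rfl fun j _ => by rw [← Algebra.commutes, ← Algebra.smul_def]
  have h2 : ∑ j, eV (m := m) j * (if j = d then TT d t else 0) = ι (negEuclidQ m) t := by
    simp only [mul_ite, mul_zero]
    rw [Finset.sum_ite_eq' Finset.univ d]
    simp [eV_mul_TT d t ht]
  rw [h1, h2, sub_self]

lemma sum_eV_TT_uC (d : Fin m) (t : Fin m → ℝ) (ht : t d = 0) (htu : ∑ j, t j ^ 2 = 1) :
    ∑ j, eV (m := m) j * (TT d t * uC d t j) = 0 := by
  have key : ∀ j, eV (m := m) j * (TT d t * uC d t j)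
      = t j • (eV j * TT d t) - (if j = d then eV d * (-1) else 0) := by
    intro j
    unfold uC
    rw [mul_sub, mul_sub]
    congr 1
    · rw [← Algebra.commutes, ← Algebra.smul_def, mul_smul_comm]
    · rcases eq_or_ne j d with h | h
      · rw [if_pos h, if_pos h, TT_sq d t ht htu, h]
      · rw [if_neg h, if_neg h, mul_zero, mul_zero]
  rw [Finset.sum_congr rfl fun j _ => key j, Finset.sum_sub_distrib]
  have h1 : ∑ j, t j • (eV (m := m) j * TT d t) = ι (negEuclidQ m) t * TT d t := by
    rw [← iota_sum t, Finset.sum_mul]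
    exact Finset.sum_congr rfl fun j _ => (smul_mul_assoc _ _ _).symm
  have h2 : ∑ j, (if j = d then eV (m := m) d * (-1) else 0) = eV d * (-1) := by
    rw [Finset.sum_ite_eq' Finset.univ d]
    simp
  rw [h1, h2, iota_mul_TT d t htu, mul_neg_one, sub_self]

/-! ### scalar-coefficient decomposition of plane-wave powers -/

noncomputable def injF : ((Fin m →₀ ℕ) →₀ ℝ) →ₗ[ℝ] (Cl m →ₗ[ℝ] V m) :=
  Finsupp.lsum ℝ fun α => LinearMap.toSpanSingleton ℝ (Cl m →ₗ[ℝ] V m) (Finsupp.lsingle α)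

@[simp] lemma injF_single (α) (r : ℝ) (z : Cl m) :
    injF (Finsupp.single α r) z = Finsupp.single α (r • z) := by
  simp [injF, LinearMap.toSpanSingleton_apply]

lemma shN_injF (i : Fin m) (p : (Fin m →₀ ℕ) →₀ ℝ) (z : Cl m) :
    shN i (injF p z) = injF (shN i p) z := by
  induction p using Finsupp.induction_linear with
  | zero => simp
  | add f g hf hg => simp only [map_add, LinearMap.add_apply, hf, hg]
  | single α r => simp

lemma mulLinN_injF (t : Fin m → ℝ) (p : (Fin m →₀ ℕ) →₀ ℝ) (z : Cl m) :
    mulLinN t (injF p z) = injF (mulLinN t p) z := by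
  unfold mulLinN
  rw [LinearMap.sum_apply, LinearMap.sum_apply, map_sum, LinearMap.sum_apply]
  refine Finset.sum_congr rfl fun j _ => ?_
  rw [LinearMap.smul_apply, LinearMap.smul_apply, shN_injF, map_smul, LinearMap.smul_apply]

lemma lmulV_injF (w : Cl m) (p : (Fin m →₀ ℕ) →₀ ℝ) (z : Cl m) :
    lmulV w (injF p z) = injF p (w * z) := by
  induction p using Finsupp.induction_linear with
  | zero => simp
  | add f g hf hg => simp only [map_add, LinearMap.add_apply, hf, hg]
  | single α r => simp [mul_smul_comm]

lemma mulPW_injF (d : Fin m) (t : Fin m → ℝ) (p : (Fin m →₀ ℕ) →₀ ℝ) (z : Cl m) :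
    mulPW d t (injF p z) = injF (mulLinN t p) z - injF (shN d p) (TT d t * z) := by
  rw [mulPW, LinearMap.sub_apply, LinearMap.comp_apply, lmulV_injF, shN_injF, mulLinN_injF]

lemma pw_decomp (d : Fin m) (t : Fin m → ℝ) (htt : TT (m := m) d t * TT d t = -1) (k : ℕ) :
    ∃ p q : (Fin m →₀ ℕ) →₀ ℝ, ∀ b : Cl m,
      ((mulPW d t) ^ k) (Finsupp.single 0 b) = injF p b + injF q (TT d t * b) := by
  induction k with
  | zero =>
    refine ⟨Finsupp.single 0 1, 0, fun b => ?_⟩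
    simp
  | succ k ih =>
    obtain ⟨p, q, H⟩ := ih
    refine ⟨mulLinN t p + shN d q, mulLinN t q - shN d p, fun b => ?_⟩
    rw [pow_succ', Module.End.mul_apply, H b, map_add, mulPW_injF, mulPW_injF]
    have hTT : TT d t * (TT d t * b) = -b := by rw [← mul_assoc, htt, neg_one_mul]
    rw [hTT, map_neg]
    simp only [map_add, map_sub, LinearMap.add_apply, LinearMap.sub_apply]
    abel

lemma pderV_single_zero (j : Fin m) (a : Cl m) : pderV j (Finsupp.single 0 a) = 0 := by
  rw [pderV_single]
  simp

lemma uC_mul_TT (d : Fin m) (t : Fin m → ℝ) (j : Fin m) :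
    uC d t j * TT d t = TT d t * uC d t j := by
  unfold uC
  rw [sub_mul, mul_sub, Algebra.commutes]
  rcases eq_or_ne j d with h | h
  · subst h; rw [if_pos rfl]
  · rw [if_neg h, zero_mul, mul_zero]

lemma lmulV_mul_mulPW_pow (d : Fin m) (t : Fin m → ℝ) {z : Cl m}
    (hz : z * TT d t = TT d t * z) (k : ℕ) (w : V m) :
    lmulV z (((mulPW d t) ^ k) w) = ((mulPW d t) ^ k) (lmulV z w) := by
  have hc : Commute (lmulV z) (mulPW d t) := lmulV_mul_mulPW d t hz
  have := (hc.pow_right k)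
  calc lmulV z (((mulPW d t) ^ k) w) = (lmulV z * (mulPW d t) ^ k) w := rfl
    _ = ((mulPW d t) ^ k * lmulV z) w := by rw [this]
    _ = ((mulPW d t) ^ k) (lmulV z w) := rfl

lemma pderV_pow_pw (j d : Fin m) (t : Fin m → ℝ) (k : ℕ) (a : Cl m) :
    pderV j (((mulPW d t) ^ (k+1)) (Finsupp.single 0 a))
      = (k+1 : ℝ) • ((mulPW d t) ^ k) (Finsupp.single 0 (uC d t j * a)) := by
  induction k with
  | zero =>
    rw [pow_one, pow_zero]
    have : pderV j (mulPW d t (Finsupp.single 0 a))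
        = (mulPW d t * pderV j + lmulV (uC d t j)) (Finsupp.single 0 a) := by
      rw [← pderV_mul_mulPW]; rfl
    rw [this, LinearMap.add_apply, Module.End.mul_apply, pderV_single_zero, map_zero,
      lmulV_single, zero_add, Module.End.one_apply]
    norm_num
  | succ k ih =>
    have h0 : ((mulPW d t) ^ (k+2)) (Finsupp.single 0 a)
        = mulPW d t (((mulPW d t) ^ (k+1)) (Finsupp.single 0 a)) := by
      rw [pow_succ', Module.End.mul_apply]
    rw [h0]
    have h1 : pderV j (mulPW d t (((mulPW d t) ^ (k+1)) (Finsupp.single 0 a)))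
        = (mulPW d t * pderV j + lmulV (uC d t j)) (((mulPW d t) ^ (k+1)) (Finsupp.single 0 a)) := by
      rw [← pderV_mul_mulPW]; rfl
    rw [h1, LinearMap.add_apply, Module.End.mul_apply, ih, map_smul,
      lmulV_mul_mulPW_pow d t (uC_mul_TT d t j) (k+1), lmulV_single]
    have h2 : ((mulPW d t) ^ (k+1)) (Finsupp.single 0 (uC d t j * a))
        = mulPW d t (((mulPW d t) ^ k) (Finsupp.single 0 (uC d t j * a))) := by
      rw [pow_succ', Module.End.mul_apply]
    rw [h2]
    push_cast
    module

lemma dirac_single_zero (a : Cl m) : diracV m (Finsupp.single 0 a) = 0 := by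
  rw [diracV, LinearMap.sum_apply]
  refine Finset.sum_eq_zero fun j _ => ?_
  rw [LinearMap.comp_apply, pderV_single_zero, map_zero]

lemma dirac_pw (d : Fin m) (t : Fin m → ℝ) (ht : t d = 0) (htu : ∑ j, t j ^ 2 = 1)
    (k : ℕ) (a : Cl m) :
    diracV m (((mulPW d t) ^ k) (Finsupp.single 0 a)) = 0 := by
  cases k with
  | zero => rw [pow_zero, Module.End.one_apply]; exact dirac_single_zero a
  | succ k =>
    obtain ⟨p, q, H⟩ := pw_decomp d t (TT_sq d t ht htu) k
    rw [diracV, LinearMap.sum_apply]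
    have key : ∀ j : Fin m,
        (lmulV (eV j) ∘ₗ pderV j) (((mulPW d t) ^ (k+1)) (Finsupp.single 0 a))
        = (k+1:ℝ) • (injF p (eV j * (uC d t j * a))
            + injF q (eV j * (TT d t * (uC d t j * a)))) := by
      intro j
      rw [LinearMap.comp_apply, pderV_pow_pw, map_smul, H (uC d t j * a), map_add,
        lmulV_injF, lmulV_injF]
    rw [Finset.sum_congr rfl fun j _ => key j, ← Finset.smul_sum, Finset.sum_add_distrib]
    have hp : ∑ j, injF (m := m) p (eV j * (uC d t j * a))
        = injF p (∑ j, eV j * (uC d t j * a)) := (map_sum _ _ _).symm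
    have hq : ∑ j, injF (m := m) q (eV j * (TT d t * (uC d t j * a)))
        = injF q (∑ j, eV j * (TT d t * (uC d t j * a))) := (map_sum _ _ _).symm
    have e1 : ∑ j, eV (m := m) j * (uC d t j * a) = 0 := by
      have h3 : ∑ j, eV (m := m) j * (uC d t j * a) = (∑ j, eV j * uC d t j) * a := by
        rw [Finset.sum_mul]
        exact Finset.sum_congr rfl fun j _ => (mul_assoc _ _ _).symm
      rw [h3, sum_eV_uC d t ht, zero_mul]
    have e2 : ∑ j, eV (m := m) j * (TT d t * (uC d t j * a)) = 0 := by
      have h3 : ∑ j, eV (m := m) j * (TT d t * (uC d t j * a))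
          = (∑ j, eV j * (TT d t * uC d t j)) * a := by
        rw [Finset.sum_mul]
        refine Finset.sum_congr rfl fun j _ => ?_
        rw [mul_assoc, mul_assoc]
      rw [h3, sum_eV_TT_uC d t ht htu, zero_mul]
    rw [hp, hq, e1, e2, map_zero, map_zero, add_zero, smul_zero]

/-! ### evaluation bridges -/

lemma evL_lmulV (x : Fin m → ℝ) (z : Cl m) (c : V m) :
    evL x (lmulV z c) = z * evL x c := by
  induction c using Finsupp.induction_linear with
  | zero => simp
  | add f g hf hg => simp only [map_add, hf, hg, mul_add]
  | single α a => rw [lmulV_single, evL_single, evL_single, mul_smul_comm]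

lemma prod_pow_add_single (x : Fin m → ℝ) (α : Fin m →₀ ℕ) (j : Fin m) :
    (∏ i, x i ^ (α + Finsupp.single j 1 : Fin m →₀ ℕ) i) = x j * ∏ i, x i ^ α i := by
  have h : ∀ i : Fin m, x i ^ (α + Finsupp.single j 1 : Fin m →₀ ℕ) i
      = x i ^ α i * (if j = i then x i else 1) := by
    intro i
    rcases eq_or_ne j i with h | h
    · subst h
      rw [if_pos rfl, Finsupp.add_apply, Finsupp.single_eq_same, pow_succ]
    · rw [if_neg h, Finsupp.add_apply, Finsupp.single_eq_of_ne' h, add_zero, mul_one]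
  rw [Finset.prod_congr rfl fun i _ => h i, Finset.prod_mul_distrib, Finset.prod_ite_eq,
    if_pos (Finset.mem_univ j), mul_comm]

lemma evL_shN (x : Fin m → ℝ) (j : Fin m) (c : V m) :
    evL x (shN j c) = x j • evL x c := by
  induction c using Finsupp.induction_linear with
  | zero => simp
  | add f g hf hg => simp only [map_add, hf, hg, smul_add]
  | single α a =>
    rw [shN_single, evL_single, evL_single, prod_pow_add_single, mul_smul]

lemma evL_mulLinN (x : Fin m → ℝ) (t : Fin m → ℝ) (c : V m) :
    evL x (mulLinN t c) = (∑ j, x j * t j) • evL x c := by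
  rw [mulLinN, LinearMap.sum_apply, map_sum]
  have h : ∀ j : Fin m, evL x ((t j • shN j) c) = (x j * t j) • evL x c := by
    intro j
    rw [LinearMap.smul_apply, map_smul, evL_shN, smul_smul, mul_comm]
  rw [Finset.sum_congr rfl fun j _ => h j, ← Finset.sum_smul]

lemma evL_mulPW (x : Fin m → ℝ) (d : Fin m) (t : Fin m → ℝ) (c : V m) :
    evL x (mulPW d t c)
      = ((∑ j, x j * t j) • (1 : Cl m) - x d • TT d t) * evL x c := by
  rw [mulPW, LinearMap.sub_apply, LinearMap.comp_apply, map_sub, evL_mulLinN, evL_shN,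
    evL_lmulV, sub_mul, smul_mul_assoc, smul_mul_assoc, one_mul]

lemma evL_single_zero (x : Fin m → ℝ) (a : Cl m) :
    evL x (Finsupp.single 0 a) = a := by
  rw [evL_single]
  simp

lemma evL_pw (x : Fin m → ℝ) (d : Fin m) (t : Fin m → ℝ) (k : ℕ) (a : Cl m) :
    evL x (((mulPW d t) ^ k) (Finsupp.single 0 a))
      = ((∑ j, x j * t j) • (1 : Cl m) - x d • TT d t) ^ k * a := by
  induction k with
  | zero => rw [pow_zero, pow_zero, Module.End.one_apply, one_mul, evL_single_zero]
  | succ k ih =>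
    rw [pow_succ', Module.End.mul_apply, evL_mulPW, ih, pow_succ', mul_assoc]

/-! ### restriction to the hyperplane -/

lemma restV_mulPW (d : Fin m) (t : Fin m → ℝ) (ht : t d = 0) :
    restV d ∘ₗ mulPW d t = (mulLinN t : V m →ₗ[ℝ] V m) ∘ₗ restV d := by
  apply Finsupp.lhom_ext
  intro α a
  rw [LinearMap.comp_apply, LinearMap.comp_apply, restV_single, mulPW, LinearMap.sub_apply,
    LinearMap.comp_apply, lmulV_single, shN_single, mulLinN_single, map_sub, map_sum]
  have hd : restV d (Finsupp.single (α + Finsupp.single d 1) (TT d t * a)) = 0 := by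
    rw [restV_single, if_neg]
    simp [Finsupp.add_apply]
  by_cases h : α d = 0
  · have hterm : ∀ j : Fin m,
        restV d (t j • Finsupp.single (α + Finsupp.single j 1) a)
          = t j • Finsupp.single (α + Finsupp.single j 1) a := by
      intro j
      rcases eq_or_ne j d with hj | hj
      · subst hj
        rw [ht]
        simp
      · rw [map_smul, restV_single, if_pos]
        rw [Finsupp.add_apply, Finsupp.single_eq_of_ne' hj, add_zero, h]
    rw [Finset.sum_congr rfl fun j _ => hterm j, hd, sub_zero, if_pos h, mulLinN_single]
  · have hterm : ∀ j : Fin m,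
        restV d (t j • Finsupp.single (α + Finsupp.single j 1) a) = 0 := by
      intro j
      rw [map_smul, restV_single, if_neg, smul_zero]
      rw [Finsupp.add_apply]
      intro hc
      exact h (by omega)
    rw [Finset.sum_congr rfl fun j _ => hterm j, Finset.sum_const_zero, hd, sub_zero,
      if_neg h, map_zero]

lemma restV_single_zero (d : Fin m) (a : Cl m) :
    restV d (Finsupp.single 0 a) = Finsupp.single 0 a := by
  rw [restV_single, if_pos]
  rfl

lemma restV_pw (d : Fin m) (t : Fin m → ℝ) (ht : t d = 0) (k : ℕ) (a : Cl m) :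
    restV d (((mulPW d t) ^ k) (Finsupp.single 0 a))
      = ((mulLinN t : V m →ₗ[ℝ] V m) ^ k) (Finsupp.single 0 a) := by
  induction k with
  | zero =>
    simp only [pow_zero, Module.End.one_apply]
    exact restV_single_zero d a
  | succ k ih =>
    rw [pow_succ', Module.End.mul_apply, ← LinearMap.comp_apply, restV_mulPW d t ht,
      LinearMap.comp_apply, ih, pow_succ', Module.End.mul_apply]

/-! ### uniqueness -/

lemma diracV_apply_coeff (c : V m) (β : Fin m →₀ ℕ) :
    diracV m c β = ∑ j, eV j * ((β j + 1 : ℝ) • c (β + Finsupp.single j 1)) := by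
  rw [diracV, LinearMap.sum_apply, Finsupp.finset_sum_apply]
  exact Finset.sum_congr rfl fun j _ => by
    rw [LinearMap.comp_apply, lmulV_apply, pderV_apply]

lemma eV_left_cancel (d : Fin m) {z : Cl m} (h : eV d * z = 0) : z = 0 := by
  have h2 := congrArg (fun w => eV (m := m) d * w) h
  simp only [mul_zero] at h2
  rw [← mul_assoc, eV_sq, neg_one_mul, neg_eq_zero] at h2
  exact h2

lemma keyUniq (d : Fin m) (c : V m) (hD : diracV m c = 0) (hR : restV d c = 0) : c = 0 := by
  have main : ∀ n : ℕ, ∀ β : Fin m →₀ ℕ, β d ≤ n → c β = 0 := by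
    intro n
    induction n with
    | zero =>
      intro β hβ
      have h0 : β d = 0 := Nat.le_zero.mp hβ
      have h1 := congrArg (fun f : V m => f β) hR
      simpa [restV_apply, h0] using h1
    | succ n ih =>
      intro β hβ
      rcases Nat.lt_or_ge (β d) (n+1) with h | h
      · exact ih β (Nat.lt_succ_iff.mp h)
      · have hbd : β d = n + 1 := le_antisymm hβ h
        have hle : Finsupp.single d 1 ≤ β := by rw [Finsupp.single_le_iff]; omega
        set γ := β - Finsupp.single d 1 with hγ
        have hβγ : γ + Finsupp.single d 1 = β := by rw [hγ, tsub_add_cancel_of_le hle]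
        have hγd : γ d = n := by
          rw [hγ, Finsupp.tsub_apply, Finsupp.single_eq_same]
          omega
        have hzero := congrArg (fun f : V m => f γ) hD
        simp only [Finsupp.coe_zero, Pi.zero_apply] at hzero
        rw [diracV_apply_coeff] at hzero
        have hterms : ∀ b : Fin m, b ∈ Finset.univ → b ≠ d →
            eV (m := m) b * ((γ b + 1 : ℝ) • c (γ + Finsupp.single b 1)) = 0 := by
          intro b _ hb
          have hct : (γ + Finsupp.single b 1 : Fin m →₀ ℕ) d = n := by
            rw [Finsupp.add_apply, Finsupp.single_eq_of_ne' hb, add_zero, hγd]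
          rw [ih _ (le_of_eq hct), smul_zero, mul_zero]
        rw [Finset.sum_eq_single d hterms (fun hd => absurd (Finset.mem_univ d) hd)] at hzero
        have hc2 := eV_left_cancel d hzero
        rw [hβγ] at hc2
        have hne : (γ d + 1 : ℝ) ≠ 0 := by positivity
        exact (smul_eq_zero.mp hc2).resolve_left hne
  ext β
  exact main (β d) β le_rfl

/-! ### analytic derivative bridge -/

lemma phi_evL (x : Fin m → ℝ) (c : V m) (φ : Cl m →ₗ[ℝ] ℝ) :
    φ (evL x c) = ∑ α ∈ c.support, (∏ i, x i ^ α i) * φ (c α) := by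
  rw [evL_eq_sum, Finsupp.sum, map_sum]
  exact Finset.sum_congr rfl fun α _ => by rw [map_smul, smul_eq_mul]

lemma deriv_evL (c : V m) (j : Fin m) (x : Fin m → ℝ) (φ : Cl m →ₗ[ℝ] ℝ) :
    deriv (fun u : ℝ => φ (evL (Function.update x j u) c)) (x j)
      = φ (evL x (pderV j c)) := by
  have hfun : (fun u : ℝ => φ (evL (Function.update x j u) c))
      = fun u : ℝ => ∑ α ∈ c.support,
          u ^ α j * ((∏ i ∈ Finset.univ.erase j, x i ^ α i) * φ (c α)) := by
    funext u
    rw [phi_evL]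
    refine Finset.sum_congr rfl fun α _ => ?_
    have hprod : (∏ i, Function.update x j u i ^ α i)
        = u ^ α j * ∏ i ∈ Finset.univ.erase j, x i ^ α i := by
      rw [← Finset.mul_prod_erase Finset.univ _ (Finset.mem_univ j), Function.update_self]
      congr 1
      exact Finset.prod_congr rfl fun i hi => by
        rw [Function.update_of_ne (Finset.ne_of_mem_erase hi)]
    rw [hprod, mul_assoc]
  rw [hfun]
  have hder : HasDerivAt (fun u : ℝ => ∑ α ∈ c.support,
      u ^ α j * ((∏ i ∈ Finset.univ.erase j, x i ^ α i) * φ (c α)))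
      (∑ α ∈ c.support, ((α j : ℝ) * x j ^ (α j - 1))
        * ((∏ i ∈ Finset.univ.erase j, x i ^ α i) * φ (c α))) (x j) := by
    apply HasDerivAt.fun_sum
    intro α _
    exact (hasDerivAt_pow (α j) (x j)).mul_const _
  rw [hder.deriv]
  have hR : φ (evL x (pderV j c)) = ∑ α ∈ c.support,
      (α j : ℝ) * ((∏ i, x i ^ (α - Finsupp.single j 1 : Fin m →₀ ℕ) i) * φ (c α)) := by
    have h1 : pderV j c
        = c.sum fun α a => (α j : ℝ) • Finsupp.single (α - Finsupp.single j 1) a := rfl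
    rw [h1, map_finsuppSum, map_finsuppSum, Finsupp.sum]
    refine Finset.sum_congr rfl fun α _ => ?_
    rw [map_smul, map_smul, evL_single, map_smul, smul_eq_mul, smul_eq_mul]
  rw [hR]
  refine Finset.sum_congr rfl fun α _ => ?_
  by_cases hz : α j = 0
  · simp [hz]
  · have hprod2 : (∏ i, x i ^ (α - Finsupp.single j 1 : Fin m →₀ ℕ) i)
        = x j ^ (α j - 1) * ∏ i ∈ Finset.univ.erase j, x i ^ α i := by
      rw [← Finset.mul_prod_erase Finset.univ _ (Finset.mem_univ j)]
      congr 1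
      · rw [Finsupp.tsub_apply, Finsupp.single_eq_same]
      · refine Finset.prod_congr rfl fun i hi => ?_
        rw [Finsupp.tsub_apply, Finsupp.single_eq_of_ne' (Ne.symm (Finset.ne_of_mem_erase hi)),
          tsub_zero]
    rw [hprod2]
    ring

/-! ### a polynomial map vanishing identically has zero coefficients -/

lemma evL_zero_coeffs (c : V m) (h : ∀ x, evL x c = 0) : c = 0 := by
  have hφ : ∀ (φ : Cl m →ₗ[ℝ] ℝ) (α : Fin m →₀ ℕ), φ (c α) = 0 := by
    intro φ α
    have heval : ∀ x : Fin m → ℝ,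
        MvPolynomial.eval x (∑ β ∈ c.support, MvPolynomial.monomial β (φ (c β))) = 0 := by
      intro x
      have h1 := congrArg φ (h x)
      rw [phi_evL, map_zero] at h1
      rw [map_sum, ← h1]
      refine Finset.sum_congr rfl fun β _ => ?_
      rw [MvPolynomial.eval_monomial, mul_comm]
      congr 1
      exact Finsupp.prod_pow β x
    have hp0 : (∑ β ∈ c.support, MvPolynomial.monomial β (φ (c β))) = 0 :=
      MvPolynomial.funext fun y => by rw [heval y, map_zero]
    have hcoeff := congrArg (MvPolynomial.coeff α) hp0
    rw [MvPolynomial.coeff_sum] at hcoeff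
    simp only [MvPolynomial.coeff_monomial, MvPolynomial.coeff_zero] at hcoeff
    rw [Finset.sum_ite_eq' c.support α (fun β => φ (c β))] at hcoeff
    by_cases hα : α ∈ c.support
    · rwa [if_pos hα] at hcoeff
    · rw [Finsupp.notMem_support_iff.mp hα, map_zero]
  ext α
  exact sep fun φ => hφ φ α

/-! ### spanning by powers of linear forms -/

noncomputable def linPow (t : Fin m → ℝ) (k : ℕ) (a : Cl m) : V m :=
  ((mulLinN t : V m →ₗ[ℝ] V m) ^ k) (Finsupp.single 0 a)

def SpSet (d : Fin m) (k : ℕ) : Set (V m) :=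
  {w | ∃ t a, t d = 0 ∧ w = linPow t k a}

def SpSet' (d : Fin m) (k : ℕ) : Set (V m) :=
  {w | ∃ t a, t d = 0 ∧ (∑ j, t j ^ 2) = 1 ∧ w = linPow t k a}

lemma mulLinN_commute (t s : Fin m → ℝ) :
    Commute (mulLinN t : V m →ₗ[ℝ] V m) (mulLinN s) := by
  show (mulLinN t : V m →ₗ[ℝ] V m) * mulLinN s = mulLinN s * mulLinN t
  unfold mulLinN
  rw [Finset.sum_mul_sum, Finset.sum_mul_sum]
  rw [Finset.sum_comm]
  refine Finset.sum_congr rfl fun l _ => Finset.sum_congr rfl fun j _ => ?_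
  rw [smul_mul_assoc, smul_mul_assoc, mul_smul_comm, mul_smul_comm, shN_comm, smul_comm]

lemma linPow_mem_step (d i : Fin m) (hi : i ≠ d) (k : ℕ) (t : Fin m → ℝ) (htd : t d = 0)
    (a : Cl m) :
    mulLinN (Pi.single i 1 : Fin m → ℝ) (linPow t k a)
      ∈ Submodule.span ℝ (SpSet d (k+1)) := by
  set A : V m →ₗ[ℝ] V m := mulLinN t with hA
  set B : V m →ₗ[ℝ] V m := mulLinN (Pi.single i 1 : Fin m → ℝ) with hB
  have hcomm : Commute A B := mulLinN_commute t (Pi.single i 1 : Fin m → ℝ)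
  have hmem : ∀ r : ℝ, ((A + r • B) ^ (k+1)) (Finsupp.single 0 a)
      ∈ Submodule.span ℝ (SpSet d (k+1)) := by
    intro r
    have hAB : A + r • B = mulLinN (t + r • (Pi.single i 1 : Fin m → ℝ)) := by
      rw [mulLinN_add, mulLinN_smul]
    rw [hAB]
    refine Submodule.subset_span ⟨t + r • (Pi.single i 1 : Fin m → ℝ), a, ?_, rfl⟩
    rw [Pi.add_apply, Pi.smul_apply, Pi.single_apply, if_neg (Ne.symm hi), smul_zero,
      add_zero, htd]
  have hexp : ∀ r : ℝ, ((A + r • B) ^ (k+1)) (Finsupp.single 0 a)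
      = ∑ l ∈ Finset.range (k+2), r ^ (k+1-l)
          • ((A ^ l * B ^ (k+1-l) * ((k+1).choose l : V m →ₗ[ℝ] V m)) (Finsupp.single 0 a)) := by
    intro r
    rw [(hcomm.smul_right r).add_pow, LinearMap.sum_apply]
    refine Finset.sum_congr rfl fun l _ => ?_
    rw [smul_pow, mul_smul_comm, smul_mul_assoc, LinearMap.smul_apply]
  have hmem2 : ∀ r : ℝ, (∑ l ∈ Finset.range (k+2), r ^ l
      • ((A ^ (k+1-l) * B ^ (k+1-(k+1-l)) * ((k+1).choose (k+1-l) : V m →ₗ[ℝ] V m))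
        (Finsupp.single 0 a))) ∈ Submodule.span ℝ (SpSet d (k+1)) := by
    intro r
    have hh := hmem r
    rw [hexp r] at hh
    rw [← Finset.sum_range_reflect] at hh
    have heq : ∀ l ∈ Finset.range (k+2),
        r ^ (k+1-(k+2-1-l)) • ((A ^ (k+2-1-l) * B ^ (k+1-(k+2-1-l))
            * ((k+1).choose (k+2-1-l) : V m →ₗ[ℝ] V m)) (Finsupp.single 0 a))
        = r ^ l • ((A ^ (k+1-l) * B ^ (k+1-(k+1-l))
            * ((k+1).choose (k+1-l) : V m →ₗ[ℝ] V m)) (Finsupp.single 0 a)) := by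
      intro l hl
      rw [Finset.mem_range] at hl
      have e1 : k+2-1-l = k+1-l := by omega
      have e2 : k+1-(k+1-l) = l := by omega
      rw [e1, e2]
    rwa [Finset.sum_congr rfl heq] at hh
  have hvk := coeff_mem _ (k+2) _ hmem2 1 (by omega)
  have hk1 : k + 1 - 1 = k := by omega
  have hk2 : k + 1 - k = 1 := by omega
  rw [hk1, hk2, pow_one] at hvk
  have hch : (k+1).choose k = k + 1 := by
    have h := Nat.choose_symm (by omega : 1 ≤ k+1)
    rw [hk1] at h
    rw [h, Nat.choose_one_right]
  rw [hch] at hvk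
  have hnat : ((A ^ k * B * ((k+1 : ℕ) : V m →ₗ[ℝ] V m)) (Finsupp.single 0 a))
      = ((k+1 : ℕ) : ℝ) • ((A ^ k * B) (Finsupp.single 0 a)) := by
    rw [Module.End.mul_apply, Module.End.natCast_apply, map_nsmul,
      ← Nat.cast_smul_eq_nsmul ℝ]
  rw [hnat] at hvk
  have hw : (A ^ k * B) (Finsupp.single 0 a) ∈ Submodule.span ℝ (SpSet d (k+1)) := by
    have h2 := Submodule.smul_mem _ (((k+1 : ℕ) : ℝ))⁻¹ hvk
    rwa [smul_smul, inv_mul_cancel₀ (Nat.cast_ne_zero.mpr (Nat.succ_ne_zero k)), one_smul]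
      at h2
  have hgoal : mulLinN (Pi.single i 1 : Fin m → ℝ) (linPow t k a)
      = (A ^ k * B) (Finsupp.single 0 a) := by
    have hcp : (B * A ^ k) = A ^ k * B := (hcomm.symm.pow_right k).eq
    rw [linPow]
    show (B * A ^ k) (Finsupp.single 0 a) = _
    rw [hcp]
  rwa [hgoal]

lemma single_mem_Sp (d : Fin m) (k : ℕ) :
    ∀ (α : Fin m →₀ ℕ), (∑ j, α j) = k → α d = 0 → ∀ a : Cl m,
      Finsupp.single α a ∈ Submodule.span ℝ (SpSet d k) := by
  induction k with
  | zero =>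
    intro α hsum hd a
    have hα : α = 0 := by
      ext j
      exact (Finset.sum_eq_zero_iff).mp hsum j (Finset.mem_univ j)
    subst hα
    refine Submodule.subset_span ⟨0, a, rfl, ?_⟩
    rw [linPow, pow_zero, Module.End.one_apply]
  | succ k ih =>
    intro α hsum hd a
    have hex : ∃ i, α i ≠ 0 := by
      by_contra hc
      push_neg at hc
      rw [Finset.sum_congr rfl fun j _ => hc j, Finset.sum_const_zero] at hsum
      exact Nat.succ_ne_zero k hsum.symm
    obtain ⟨i, hi0⟩ := hex
    have hid : i ≠ d := fun hc => hi0 (by rw [hc, hd])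
    have hle : Finsupp.single i 1 ≤ α := by rw [Finsupp.single_le_iff]; omega
    set α' := α - Finsupp.single i 1 with hα'
    have hαeq : α' + Finsupp.single i 1 = α := tsub_add_cancel_of_le hle
    have hsum' : (∑ j, α' j) = k := by
      have h1 : ∑ j, ((α' + Finsupp.single i 1 : Fin m →₀ ℕ) j)
          = (∑ j, α' j) + ∑ j, (Finsupp.single i 1 : Fin m →₀ ℕ) j := by
        rw [← Finset.sum_add_distrib]
        exact Finset.sum_congr rfl fun j _ => Finsupp.add_apply _ _ _
      have h2 : ∑ j, (Finsupp.single i 1 : Fin m →₀ ℕ) j = 1 := by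
        have hs : ∀ j : Fin m, (Finsupp.single i 1 : Fin m →₀ ℕ) j
            = if j = i then 1 else 0 := by
          intro j
          rcases eq_or_ne j i with h | h
          · subst h; simp
          · rw [Finsupp.single_eq_of_ne' (Ne.symm h), if_neg h]
        rw [Finset.sum_congr rfl fun j _ => hs j, Finset.sum_ite_eq' Finset.univ i,
          if_pos (Finset.mem_univ i)]
      rw [hαeq] at h1
      omega
    have hd' : α' d = 0 := by
      rw [hα', Finsupp.tsub_apply, hd]
      exact Nat.zero_sub _
    have hsingle : Finsupp.single α a
        = mulLinN (Pi.single i 1 : Fin m → ℝ) (Finsupp.single α' a) := by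
      rw [mulLinN_single, Finset.sum_eq_single i]
      · rw [Pi.single_eq_same, one_smul, hαeq]
      · intro b _ hb
        rw [Pi.single_eq_of_ne hb, zero_smul]
      · intro h; exact absurd (Finset.mem_univ i) h
    rw [hsingle]
    have hmap : Submodule.map (mulLinN (Pi.single i 1 : Fin m → ℝ))
        (Submodule.span ℝ (SpSet d k)) ≤ Submodule.span ℝ (SpSet d (k+1)) := by
      rw [Submodule.map_span, Submodule.span_le]
      rintro w ⟨w', ⟨t, b, htd, rfl⟩, rfl⟩
      exact linPow_mem_step d i hid k t htd b
    exact hmap ⟨_, ih α' hsum' hd' a, rfl⟩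

lemma Sp_le_Sp' (hm : 2 ≤ m) (d : Fin m) (k : ℕ) :
    Submodule.span ℝ (SpSet d k) ≤ Submodule.span ℝ (SpSet' d k) := by
  rw [Submodule.span_le]
  rintro w ⟨t, a, htd, rfl⟩
  by_cases h0 : t = 0
  · subst h0
    cases k with
    | zero =>
      have hnt : Nontrivial (Fin m) := Fin.nontrivial_iff_two_le.mpr hm
      obtain ⟨i0, hi0⟩ := exists_ne d
      refine Submodule.subset_span ⟨Pi.single i0 1, a, ?_, single_sq_sum i0, ?_⟩
      · rw [Pi.single_apply, if_neg (Ne.symm hi0)]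
      · rw [linPow, linPow, pow_zero, pow_zero]
    | succ n =>
      rw [linPow, mulLinN_zero, zero_pow (Nat.succ_ne_zero n), LinearMap.zero_apply]
      exact Submodule.zero_mem _
  · have hpos : 0 < ∑ j, t j ^ 2 := by
      obtain ⟨j0, hj0⟩ := Function.ne_iff.mp h0
      refine Finset.sum_pos' (fun j _ => sq_nonneg _) ⟨j0, Finset.mem_univ j0, ?_⟩
      have : t j0 ≠ 0 := hj0
      positivity
    set r := Real.sqrt (∑ j, t j ^ 2) with hr
    have hrpos : 0 < r := Real.sqrt_pos.mpr hpos
    have hr2 : r ^ 2 = ∑ j, t j ^ 2 := Real.sq_sqrt hpos.le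
    have hunit : ∑ j, ((r⁻¹ • t) j) ^ 2 = 1 := by
      have h1 : ∀ j : Fin m, ((r⁻¹ • t) j) ^ 2 = r⁻¹ ^ 2 * t j ^ 2 := by
        intro j; rw [Pi.smul_apply, smul_eq_mul, mul_pow]
      rw [Finset.sum_congr rfl fun j _ => h1 j, ← Finset.mul_sum, ← hr2, inv_pow,
        inv_mul_cancel₀ (pow_ne_zero 2 hrpos.ne')]
    have hsc : linPow t k a = r ^ k • linPow (r⁻¹ • t) k a := by
      have heq : t = r • (r⁻¹ • t) := by rw [smul_smul, mul_inv_cancel₀ hrpos.ne', one_smul]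
      rw [linPow, linPow]
      conv_lhs => rw [heq]
      rw [mulLinN_smul, smul_pow, LinearMap.smul_apply]
    rw [hsc]
    refine Submodule.smul_mem _ _ (Submodule.subset_span ⟨r⁻¹ • t, a, ?_, hunit, rfl⟩)
    rw [Pi.smul_apply, htd, smul_zero]

lemma coeffs_mem_span (hm : 2 ≤ m) (d : Fin m) (k : ℕ) (c : V m)
    (hsupp : ∀ α ∈ c.support, (∑ j, α j) = k ∧ α d = 0) :
    c ∈ Submodule.span ℝ (SpSet' d k) := by
  rw [← Finsupp.sum_single c, Finsupp.sum]
  apply Submodule.sum_mem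
  intro α hα
  exact Sp_le_Sp' hm d k (single_mem_Sp d k α (hsupp α hα).1 (hsupp α hα).2 (c α))

end PW

open PW

/-- Plane waves span the spherical monogenics: for `m ≥ 2`, every monogenic Clifford-valued
polynomial map homogeneous of degree `k` is a finite right-linear combination of monogenic
plane waves `(⟨x,tᵢ⟩·1 - ι(tᵢ)ι(sᵢ)·⟨x,sᵢ⟩)^k · cᵢ` with `tᵢ, sᵢ` orthonormal. -/
theorem planeWaves_span_monogenics (m k : ℕ) (hm : 2 ≤ m)
    (M : (Fin m → ℝ) → CliffordAlgebra (negEuclidQ m))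
    (hM : IsHomogPolyMap m k M) (hMono : IsMonogenic m M) :
    ∃ (n : ℕ) (t s : Fin n → Fin m → ℝ) (c : Fin n → CliffordAlgebra (negEuclidQ m)),
      (∀ i, ∑ j, t i j ^ 2 = 1) ∧ (∀ i, ∑ j, s i j ^ 2 = 1) ∧
      (∀ i, ∑ j, t i j * s i j = 0) ∧
      ∀ x, M x = ∑ i, ((∑ j, x j * t i j) • (1 : CliffordAlgebra (negEuclidQ m))
        - (∑ j, x j * s i j) • (ι (negEuclidQ m) (t i) * ι (negEuclidQ m) (s i))) ^ k * c i := by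
  classical
  obtain ⟨cM, hdeg, hev⟩ := hM
  obtain ⟨g, hg1, hg2⟩ := hMono
  have hm0 : 0 < m := by omega
  set d : Fin m := ⟨0, hm0⟩ with hdd
  have hM' : ∀ x, M x = evL x cM := fun x => by
    rw [hev x]; exact (evL_eq_sum x cM).symm
  have hgj : ∀ (j : Fin m) (x : Fin m → ℝ), g j x = evL x (pderV j cM) := by
    intro j x
    have hφ : ∀ φ : CliffordAlgebra (negEuclidQ m) →ₗ[ℝ] ℝ,
        φ (g j x) = φ (evL x (pderV j cM)) := by
      intro φ
      rw [← hg1 j x φ]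
      have hfun : (fun u : ℝ => φ (M (Function.update x j u)))
          = fun u : ℝ => φ (evL (Function.update x j u) cM) := by
        funext u; rw [hM']
      rw [hfun, deriv_evL]
    have h0 := sep (v := g j x - evL x (pderV j cM))
      (fun φ => by rw [map_sub, hφ, sub_self])
    exact sub_eq_zero.mp h0
  have hDir : diracV m cM = 0 := by
    apply evL_zero_coeffs
    intro x
    rw [diracV, LinearMap.sum_apply, map_sum]
    have hterm : ∀ j : Fin m, evL x ((lmulV (eV j) ∘ₗ pderV j) cM)
        = ι (negEuclidQ m) (Pi.single j 1) * g j x := by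
      intro j
      rw [LinearMap.comp_apply, evL_lmulV, ← hgj]
      rfl
    rw [Finset.sum_congr rfl fun j _ => hterm j]
    exact hg2 x
  set c0 : PW.V m := restV d cM with hc0
  have hc0mem : c0 ∈ Submodule.span ℝ (SpSet' d k) := by
    apply coeffs_mem_span hm d k
    intro α hα
    have hα' := Finsupp.mem_support_iff.mp hα
    rw [hc0, restV_apply] at hα'
    by_cases h : α d = 0
    · rw [if_pos h] at hα'
      exact ⟨hdeg α (Finsupp.mem_support_iff.mpr hα'), h⟩
    · rw [if_neg h] at hα'
      exact absurd rfl hα'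
  obtain ⟨n, f, gens, hsum⟩ := Submodule.mem_span_set'.mp hc0mem
  have hgen : ∀ i : Fin n, ∃ t a, t d = 0 ∧ (∑ j, t j ^ 2) = 1
      ∧ (gens i : PW.V m) = linPow t k a := fun i => (gens i).2
  choose tt aa h1 h2 h3 using hgen
  refine ⟨n, tt, fun _ => Pi.single d 1, fun i => f i • aa i, h2, fun _ => single_sq_sum d,
    fun i => by rw [sum_mul_single]; exact h1 i, ?_⟩
  intro x
  set N : PW.V m := ∑ i, ((mulPW d (tt i)) ^ k) (Finsupp.single 0 (f i • aa i)) with hN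
  have hNM : cM = N := by
    have hsub : diracV m (cM - N) = 0 := by
      rw [map_sub, hDir, hN, map_sum, zero_sub, neg_eq_zero]
      exact Finset.sum_eq_zero fun i _ => dirac_pw d (tt i) (h1 i) (h2 i) k (f i • aa i)
    have hrest : restV d (cM - N) = 0 := by
      rw [map_sub]
      have hNrest : restV d N = c0 := by
        rw [hN, map_sum, ← hsum]
        refine Finset.sum_congr rfl fun i _ => ?_
        rw [restV_pw d (tt i) (h1 i) k, h3 i, linPow, ← map_smul, Finsupp.smul_single]
      rw [hNrest, ← hc0, sub_self]
    have h0 := keyUniq d (cM - N) hsub hrest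
    exact sub_eq_zero.mp h0
  rw [hM' x, hNM, hN, map_sum]
  refine Finset.sum_congr rfl fun i _ => ?_
  rw [evL_pw, sum_mul_single]
  rfl
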